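/- Let n ≥ 1, let a_1,…,a_n > 0 be reals with A = Σ_{i=1}^n a_i, let p = (p_0,…,p_{n+1}) be a probability vector on {-1,1}^{n+2}, and define the linear threshold functions f(x) = sign(Σ_{i=1}^n a_i x_i − (A/2)x_{n+1} − (A/2)x_{n+2}) and g(x) = sign(Σ_{i=1}^n a_i x_i + (A/2)x_{n+1} + (A/2)x_{n+2}) on {-1,1}^{n+2}. Then for every i ∈ {1,…,n}: \tilde g^p(i) = \tilde f^p(i) − 2(p_{n+1} − p_{n−1}). -/
import Mathlib

open Finset

noncomputable section

/-- `sgn z` is `1` if `z ≥ 0` and `-1` otherwise. -/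
def sgn (z : ℝ) : ℝ := if 0 ≤ z then 1 else -1

/-- The ±1 real value encoded by a Boolean coordinate (`true ↦ 1`, `false ↦ -1`). -/
def chi (b : Bool) : ℝ := if b then 1 else -1

/-- `wt x` is the number of coordinates of `x ∈ {-1,1}^n` equal to `1`. -/
def wt {n : ℕ} (x : Fin n → Bool) : ℤ :=
  ((Finset.univ.filter fun i => x i = true).card : ℤ)

/-- Inner product `w · x` of a real vector `w` with a ±1 vector `x`. -/
def dotp {n : ℕ} (w : Fin n → ℝ) (x : Fin n → Bool) : ℝ :=
  ∑ i, w i * chi (x i)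

/-- The `i`-th semivalue of `f : {-1,1}^n → {-1,1}` with respect to the
probability vector `p` (indexed by `ℤ`, with `p t = 0` out of range):
`∑_{x : x_i = -1} p_{wt x} f(x) x_i + ∑_{x : x_i = 1} p_{wt x - 1} f(x) x_i`. -/
def semivalue {n : ℕ} (p : ℤ → ℝ) (f : (Fin n → Bool) → ℝ) (i : Fin n) : ℝ :=
  ∑ x : Fin n → Bool, (if x i then p (wt x - 1) else p (wt x)) * f x * chi (x i)

/-- `μ'_p(x) = p_{wt x} + p_{wt x - 1}`. -/
def mu' {n : ℕ} (p : ℤ → ℝ) (x : Fin n → Bool) : ℝ := p (wt x) + p (wt x - 1)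

/-- The normalizing factor `Λ(p) = ∑_x μ'_p(x)`. -/
def lam (n : ℕ) (p : ℤ → ℝ) : ℝ := ∑ x : Fin n → Bool, mu' p x

/-- The probability distribution `μ_p(x) = μ'_p(x)/Λ(p)`. -/
def mu {n : ℕ} (p : ℤ → ℝ) (x : Fin n → Bool) : ℝ := mu' p x / lam n p

lemma sgn_of_nonneg {z : ℝ} (h : 0 ≤ z) : sgn z = 1 := if_pos h

lemma sgn_of_neg {z : ℝ} (h : z < 0) : sgn z = -1 := if_neg (not_le.mpr h)

lemma wt_eq_sum {m : ℕ} (x : Fin m → Bool) :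
    wt x = ∑ j : Fin m, (if x j then (1:ℤ) else 0) := by
  unfold wt
  rw [Finset.card_filter]
  push_cast
  simp

lemma wt_update {m : ℕ} (x : Fin m → Bool) (i : Fin m) (b : Bool) :
    wt (Function.update x i b) =
      wt x - (if x i then 1 else 0) + (if b then 1 else 0) := by
  rw [wt_eq_sum, wt_eq_sum]
  have h : ∑ j : Fin m, ((if Function.update x i b j then (1:ℤ) else 0)
      - (if x j then 1 else 0)) = (if b then 1 else 0) - (if x i then 1 else 0) := by
    rw [Finset.sum_eq_single i]
    · simp
    · intro j _ hj; simp [Function.update_of_ne hj]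
    · intro h; exact absurd (mem_univ i) h
  rw [Finset.sum_sub_distrib] at h
  linarith

theorem stmt11 (n : ℕ) (hn : 1 ≤ n) (a : Fin n → ℝ) (ha : ∀ i, 0 < a i)
    (A : ℝ) (hA : A = ∑ i, a i)
    (p : ℤ → ℝ)
    (hp_nonneg : ∀ t : ℤ, 0 ≤ p t)
    (hp_out : ∀ t : ℤ, (t < 0 ∨ (n : ℤ) + 2 ≤ t) → p t = 0)
    (hp_sum : ∑ t ∈ Finset.range (n + 2), ((n + 1).choose t : ℝ) * p (t : ℤ) = 1)
    (f g : (Fin (n + 2) → Bool) → ℝ)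
    (hf : ∀ x : Fin (n + 2) → Bool,
      f x = sgn ((∑ i : Fin n, a i * chi (x (Fin.castAdd 2 i)))
        - A / 2 * chi (x ⟨n, by omega⟩) - A / 2 * chi (x ⟨n + 1, by omega⟩)))
    (hg : ∀ x : Fin (n + 2) → Bool,
      g x = sgn ((∑ i : Fin n, a i * chi (x (Fin.castAdd 2 i)))
        + A / 2 * chi (x ⟨n, by omega⟩) + A / 2 * chi (x ⟨n + 1, by omega⟩))) :
    ∀ i : Fin (n + 2), (i : ℕ) < n →
      semivalue p g i = semivalue p f i - 2 * (p ((n : ℤ) + 1) - p ((n : ℤ) - 1)) := by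
  intro i hi
  classical
  set u : Fin (n + 2) := ⟨n, by omega⟩ with hudef
  set v : Fin (n + 2) := ⟨n + 1, by omega⟩ with hvdef
  have chit : chi true = 1 := rfl
  have chif : chi false = -1 := rfl
  have hiu : i ≠ u := by
    intro h; rw [Fin.ext_iff] at h; simp [hudef] at h; omega
  have hiv : i ≠ v := by
    intro h; rw [Fin.ext_iff] at h; simp [hvdef] at h; omega
  -- the two exceptional points
  set xp : Fin (n + 2) → Bool := fun _ => true with hxpdef
  set xm : Fin (n + 2) → Bool := fun j => decide ((j : ℕ) < n) with hxmdef
  have hwtp : wt xp = (n : ℤ) + 2 := by rw [hxpdef]; simp [wt]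
  have hwtm : wt xm = (n : ℤ) := by
    rw [hxmdef]; unfold wt; norm_num
    have h : (univ.filter fun j : Fin (n+2) => (j:ℕ) < n) =
        Finset.map (Fin.castAddEmb 2) univ := by
      ext j
      simp only [mem_filter, mem_univ, true_and, Finset.mem_map]
      constructor
      · intro h; exact ⟨⟨j, h⟩, by simp [Fin.castAddEmb, Fin.ext_iff]⟩
      · rintro ⟨k, -, rfl⟩; simp [Fin.castAddEmb, Fin.castAdd]
    rw [h]; simp
  -- basic facts about the linear form
  have hA0 : 0 < A := by
    rw [hA]; exact Finset.sum_pos (fun j _ => ha j) ⟨⟨0, hn⟩, mem_univ _⟩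
  have hchi_le : ∀ b : Bool, chi b ≤ 1 := by intro b; cases b <;> simp [chi]
  have hchi_ge : ∀ b : Bool, -1 ≤ chi b := by intro b; cases b <;> simp [chi]
  have hS_le : ∀ x : Fin (n+2) → Bool,
      (∑ j : Fin n, a j * chi (x (Fin.castAdd 2 j))) ≤ A := by
    intro x; rw [hA]
    apply Finset.sum_le_sum
    intro j _
    nlinarith [ha j, hchi_le (x (Fin.castAdd 2 j))]
  have hS_ge : ∀ x : Fin (n+2) → Bool,
      -A ≤ (∑ j : Fin n, a j * chi (x (Fin.castAdd 2 j))) := by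
    intro x; rw [hA, ← Finset.sum_neg_distrib]
    apply Finset.sum_le_sum
    intro j _
    nlinarith [ha j, hchi_ge (x (Fin.castAdd 2 j))]
  have hS_lt : ∀ x : Fin (n+2) → Bool,
      (¬ ∀ j : Fin n, x (Fin.castAdd 2 j) = true) →
      (∑ j : Fin n, a j * chi (x (Fin.castAdd 2 j))) < A := by
    intro x hx
    push_neg at hx
    obtain ⟨j0, hj0⟩ := hx
    have hj0' : x (Fin.castAdd 2 j0) = false := by
      cases h : x (Fin.castAdd 2 j0)
      · rfl
      · exact absurd h hj0
    rw [hA]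
    apply Finset.sum_lt_sum
    · intro j _; nlinarith [ha j, hchi_le (x (Fin.castAdd 2 j))]
    · refine ⟨j0, mem_univ _, ?_⟩
      rw [hj0', chif]
      have := ha j0
      linarith
  have hS_eq : ∀ x : Fin (n+2) → Bool,
      (∀ j : Fin n, x (Fin.castAdd 2 j) = true) →
      (∑ j : Fin n, a j * chi (x (Fin.castAdd 2 j))) = A := by
    intro x hx
    rw [hA]
    apply Finset.sum_congr rfl
    intro j _
    rw [hx j, chit, mul_one]
  -- coordinate decomposition
  have hcases : ∀ j : Fin (n+2), (∃ k : Fin n, j = Fin.castAdd 2 k) ∨ j = u ∨ j = v := by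
    intro j
    by_cases h1 : (j : ℕ) < n
    · exact Or.inl ⟨⟨j, h1⟩, by simp [Fin.ext_iff, Fin.castAdd]⟩
    · right
      have h2 : (j : ℕ) = n ∨ (j : ℕ) = n + 1 := by omega
      rcases h2 with h | h
      · exact Or.inl (Fin.ext h)
      · exact Or.inr (Fin.ext h)
  have hxi_all : ∀ x : Fin (n+2) → Bool,
      (∀ j : Fin n, x (Fin.castAdd 2 j) = true) → x i = true := by
    intro x hall
    have e : Fin.castAdd 2 (⟨(i : ℕ), hi⟩ : Fin n) = i := Fin.ext rfl
    rw [← e]; exact hall _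
  have hxp_eq : ∀ x : Fin (n+2) → Bool,
      (∀ j : Fin n, x (Fin.castAdd 2 j) = true) → x u = true → x v = true → x = xp := by
    intro x hall h1 h2
    funext j
    rcases hcases j with ⟨k, rfl⟩ | rfl | rfl
    · exact hall k
    · exact h1
    · exact h2
  have hxm_eq : ∀ x : Fin (n+2) → Bool,
      (∀ j : Fin n, x (Fin.castAdd 2 j) = true) → x u = false → x v = false → x = xm := by
    intro x hall h1 h2
    funext j
    rcases hcases j with ⟨k, rfl⟩ | rfl | rfl
    · rw [hall k, hxmdef]; simp [Fin.castAdd]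
    · rw [h1, hxmdef]; simp [hudef]
    · rw [h2, hxmdef]; simp [hvdef]
  have hxpu : xp u = true := rfl
  have hxmu : xm u = false := by rw [hxmdef]; simp [hudef]
  have hxpv : xp v = true := rfl
  have hxmv : xm v = false := by rw [hxmdef]; simp [hvdef]
  have hxmi : xm i = true := by rw [hxmdef]; simp [hi]
  have hxpi : xp i = true := rfl
  have hmp : xm ≠ xp := by
    intro h
    have := congrFun h u
    rw [hxmu, hxpu] at this
    exact absurd this (by simp)
  have hpm : xp ≠ xm := Ne.symm hmp
  -- the key pointwise identity
  have key : ∀ x : Fin (n+2) → Bool,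
      (if x i then p (wt x - 1) else p (wt x)) * g x * chi (x i)
        - (if x i then p (wt x - 1) else p (wt x)) * f x * chi (x i)
      = (if x i then p (wt x - 1) else p (wt x)) *
          (if x u = x v then (if x u then (2:ℝ) else -2) else 0) * chi (x i)
        - (if x = xp then 2 * p ((n:ℤ) + 1) else 0)
        + (if x = xm then 2 * p ((n:ℤ) - 1) else 0) := by
    intro x
    by_cases huv : x u = x v
    · cases hxu : x u <;> cases hxv : x v
      · -- both false
        by_cases hall : ∀ j : Fin n, x (Fin.castAdd 2 j) = true
        · -- x = xm
          have hxeq : x = xm := hxm_eq x hall hxu hxv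
          have hf1 : f x = 1 := by
            rw [hf x, hS_eq x hall, hxu, hxv, chif]
            apply sgn_of_nonneg; linarith
          have hg1 : g x = 1 := by
            rw [hg x, hS_eq x hall, hxu, hxv, chif]
            apply sgn_of_nonneg; linarith
          rw [hf1, hg1]
          simp [hxeq, hxmi, hwtm, chit, hmp]
          try ring
          try linarith
        · -- generic: g - f = -2
          have hnp : x ≠ xp := by
            intro h; exact hall fun j => by simp [h, hxpdef]
          have hnm : x ≠ xm := by
            intro h; apply hall; intro j; rw [h, hxmdef]; simp [Fin.castAdd]
          have hf1 : f x = 1 := by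
            rw [hf x, hxu, hxv, chif]
            apply sgn_of_nonneg
            have := hS_ge x
            linarith
          have hg1 : g x = -1 := by
            rw [hg x, hxu, hxv, chif]
            apply sgn_of_neg
            have := hS_lt x hall
            linarith
          simp only [hf1, hg1, if_neg hnp, if_neg hnm]
          norm_num
          try (split_ifs <;> ring)
          try ring
          try linarith
      · simp [hxu, hxv] at huv
      · simp [hxu, hxv] at huv
      · -- both true
        by_cases hall : ∀ j : Fin n, x (Fin.castAdd 2 j) = true
        · -- x = xp
          have hxeq : x = xp := hxp_eq x hall hxu hxv
          have hf1 : f x = 1 := by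
            rw [hf x, hS_eq x hall, hxu, hxv, chit]
            apply sgn_of_nonneg; linarith
          have hg1 : g x = 1 := by
            rw [hg x, hS_eq x hall, hxu, hxv, chit]
            apply sgn_of_nonneg; linarith
          have e : (n : ℤ) + 2 - 1 = (n : ℤ) + 1 := by ring
          rw [hf1, hg1]
          simp [hxeq, hxpi, hwtp, e, chit, hpm]
          try ring
          try linarith
        · -- generic: g - f = 2
          have hnp : x ≠ xp := by
            intro h; exact hall fun j => by simp [h, hxpdef]
          have hnm : x ≠ xm := by
            intro h; apply hall; intro j; rw [h, hxmdef]; simp [Fin.castAdd]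
          have hf1 : f x = -1 := by
            rw [hf x, hxu, hxv, chit]
            apply sgn_of_neg
            have := hS_lt x hall
            linarith
          have hg1 : g x = 1 := by
            rw [hg x, hxu, hxv, chit]
            apply sgn_of_nonneg
            have := hS_ge x
            linarith
          simp only [hf1, hg1, if_neg hnp, if_neg hnm]
          norm_num
          try (split_ifs <;> ring)
          try ring
          try linarith
    · -- mixed: f x = g x
      have hfg : g x = f x := by
        rw [hf x, hg x]
        congr 1
        cases hxu : x u <;> cases hxv : x v
        · exact absurd (hxu.trans hxv.symm) huv
        · rw [chit, chif]; ring
        · rw [chit, chif]; ring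
        · exact absurd (hxu.trans hxv.symm) huv
      have hnp : x ≠ xp := by
        intro h; apply huv; rw [h, hxpu]
      have hnm : x ≠ xm := by
        intro h; apply huv; rw [h, hxmu, hxmv]
      rw [hfg, if_neg huv, if_neg hnp, if_neg hnm]
      ring
  -- the main sum vanishes by an involution
  have hU0 : ∑ x : Fin (n+2) → Bool,
      (if x i then p (wt x - 1) else p (wt x)) *
        (if x u = x v then (if x u then (2:ℝ) else -2) else 0) * chi (x i) = 0 := by
    apply Finset.sum_ninvolution (fun x => Function.update x i (!x i))
    · intro x
      have h2 : Function.update x i (!x i) u = x u :=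
        Function.update_of_ne (Ne.symm hiu) _ _
      have h3 : Function.update x i (!x i) v = x v :=
        Function.update_of_ne (Ne.symm hiv) _ _
      have hw := wt_update x i (!x i)
      have h1 : Function.update x i (!x i) i = !x i := by simp
      cases hxi : x i
      · simp only [hxi, Bool.not_false] at h1 h2 h3 hw
        norm_num at hw
        have e : wt x + 1 - 1 = wt x := by ring
        simp only [Bool.not_false, h1, h2, h3, hw, e, chit, chif]
        norm_num
        try (split_ifs <;> ring)
        try ring
        try linarith
      · simp only [hxi, Bool.not_true] at h1 h2 h3 hw
        norm_num at hw
        simp only [Bool.not_true, h1, h2, h3, hw, chit, chif]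
        norm_num
        try (split_ifs <;> ring)
        try ring
        try linarith
    · intro x _ h
      have := congrFun h i
      rw [Function.update_self] at this
      exact absurd this (by cases x i <;> simp)
    · intro x; exact mem_univ _
    · intro x
      funext j
      by_cases hj : j = i
      · subst hj; simp
      · simp [Function.update_of_ne hj]
  -- put everything together
  have hdiff : semivalue p g i - semivalue p f i
      = -(2 * (p ((n:ℤ) + 1) - p ((n:ℤ) - 1))) := by
    unfold semivalue
    rw [← Finset.sum_sub_distrib]
    rw [Finset.sum_congr rfl (fun x _ => key x)]
    rw [Finset.sum_add_distrib, Finset.sum_sub_distrib, hU0]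
    rw [Finset.sum_ite_eq' univ xp fun _ => 2 * p ((n:ℤ) + 1)]
    rw [Finset.sum_ite_eq' univ xm fun _ => 2 * p ((n:ℤ) - 1)]
    simp only [mem_univ, if_true]
    ring
  linarith
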